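/- Let A be a finite subset of an abelian group. Then E⁺(A−A) ≥ |A−A|^{−1} · |A² − Δ(A)|² ≥ |A|² |A−A|, where A² − Δ(A) = {(a1 − a, a2 − a) : a, a1, a2 ∈ A} ⊆ G × G. -/

import Mathlib

open Finset Pointwise

theorem stmt17 {G : Type*} [AddCommGroup G] [DecidableEq G] (A : Finset G) :
    (A.card : ℝ)^2 * ((A - A).card : ℝ) ≤
      ((((A ×ˢ A) - A.image (fun a => (a, a))).card : ℝ))^2 / ((A - A).card : ℝ) ∧
    ((((A ×ˢ A) - A.image (fun a => (a, a))).card : ℝ))^2 / ((A - A).card : ℝ) ≤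
      ((((A - A) ×ˢ (A - A) ×ˢ (A - A) ×ˢ (A - A)).filter
        (fun q => q.1 + q.2.1 = q.2.2.1 + q.2.2.2)).card : ℝ) := by
  classical
  set D : Finset G := A - A with hD
  set S : Finset (G × G) := (A ×ˢ A) - A.image (fun a => (a, a)) with hS
  -- membership characterizations
  have hmemS : ∀ p : G × G, p ∈ S ↔ ∃ a₁ ∈ A, ∃ a₂ ∈ A, ∃ a ∈ A,
      p = (a₁ - a, a₂ - a) := by
    intro p
    rw [hS, mem_sub]
    constructor
    · rintro ⟨u, hu, v, hv, rfl⟩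
      rw [mem_product] at hu
      rw [mem_image] at hv
      obtain ⟨a, ha, rfl⟩ := hv
      exact ⟨u.1, hu.1, u.2, hu.2, a, ha, rfl⟩
    · rintro ⟨a₁, h₁, a₂, h₂, a, ha, rfl⟩
      exact ⟨(a₁, a₂), mem_product.2 ⟨h₁, h₂⟩, (a, a), mem_image_of_mem _ ha, rfl⟩
  have hmemD : ∀ d : G, d ∈ D ↔ ∃ a₁ ∈ A, ∃ a₂ ∈ A, a₁ - a₂ = d := by
    intro d; rw [hD, mem_sub]
  -- step 1 : |A| * |D| ≤ |S|
  have hex : ∀ d ∈ D, ∃ a, a ∈ A ∧ a + d ∈ A := by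
    intro d hd
    obtain ⟨a₁, h₁, a₂, h₂, h⟩ := (hmemD d).1 hd
    exact ⟨a₂, h₂, by rw [← h]; simpa using h₁⟩
  set w : G → G := fun d => if h : ∃ a, a ∈ A ∧ a + d ∈ A then h.choose else 0 with hw
  have hwA : ∀ d ∈ D, w d ∈ A ∧ w d + d ∈ A := by
    intro d hd
    have h := hex d hd
    simp only [hw, dif_pos h]
    exact h.choose_spec
  have h1 : A.card * D.card ≤ S.card := by
    rw [← card_product]
    apply card_le_card_of_injOn (fun p : G × G => (p.1 - w p.2, p.2))
    · intro p hp
      rw [mem_coe, mem_product] at hp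
      obtain ⟨hwA1, hwA2⟩ := hwA p.2 hp.2
      refine (hmemS _).2 ⟨p.1, hp.1, w p.2 + p.2, hwA2, w p.2, hwA1, ?_⟩
      simp
    · intro p _ q _ h
      simp only [Prod.mk.injEq] at h
      obtain ⟨h1, h2⟩ := h
      rw [h2] at h1
      exact Prod.ext (by simpa using h1) h2
  -- step 2 : |S| ≤ number of (x,y) ∈ D × D with x + y ∈ D
  have h2 : S.card ≤ ((D ×ˢ D).filter fun p : G × G => p.1 + p.2 ∈ D).card := by
    apply card_le_card_of_injOn (fun p : G × G => (p.1, -p.2))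
    · intro p hp
      obtain ⟨a₁, h₁, a₂, h₂, a, ha, rfl⟩ := (hmemS p).1 hp
      refine mem_filter.2 ⟨mem_product.2 ⟨?_, ?_⟩, ?_⟩
      · exact (hmemD _).2 ⟨a₁, h₁, a, ha, rfl⟩
      · exact (hmemD _).2 ⟨a, ha, a₂, h₂, by show a - a₂ = -(a₂ - a); abel⟩
      · exact (hmemD _).2 ⟨a₁, h₁, a₂, h₂, by show a₁ - a₂ = (a₁ - a) + -(a₂ - a); abel⟩
    · intro p _ q _ h
      simp only [Prod.mk.injEq, neg_inj] at h
      exact Prod.ext h.1 h.2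
  -- step 3 : the quadruple count equals the additive energy of D
  have h3 : (((D ×ˢ D ×ˢ D ×ˢ D).filter
      (fun q : G × G × G × G => q.1 + q.2.1 = q.2.2.1 + q.2.2.2)).card) =
      Finset.addEnergy D D := by
    rw [Finset.addEnergy_eq_card_filter]
    apply card_equiv (Equiv.prodAssoc G G (G × G)).symm
    rintro ⟨a, b, c, d⟩
    simp [Equiv.prodAssoc, and_assoc]
  -- step 4 : Cauchy–Schwarz
  have h4 : ((D ×ˢ D).filter fun p : G × G => p.1 + p.2 ∈ D).card ^ 2 ≤
      D.card * Finset.addEnergy D D :=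
    Finset.card_sq_le_card_mul_addEnergy D D D
  -- combine in ℕ
  have key : S.card ^ 2 ≤ D.card * (((D ×ˢ D ×ˢ D ×ˢ D).filter
      (fun q : G × G × G × G => q.1 + q.2.1 = q.2.2.1 + q.2.2.2)).card) := by
    rw [h3]
    exact le_trans (Nat.pow_le_pow_left h2 2) h4
  -- pass to ℝ
  rcases Nat.eq_zero_or_pos D.card with hzero | hpos
  · rw [hzero]
    norm_num
  · have hDpos : (0:ℝ) < (D.card : ℝ) := by exact_mod_cast hpos
    constructor
    · rw [le_div_iff₀ hDpos]
      have : (A.card * D.card : ℝ) ^ 2 ≤ (S.card : ℝ) ^ 2 := by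
        have := h1
        have h1' : ((A.card * D.card : ℕ) : ℝ) ≤ (S.card : ℝ) := by exact_mod_cast this
        push_cast at h1'
        apply pow_le_pow_left₀ (by positivity) h1'
      calc (A.card : ℝ)^2 * (D.card : ℝ) * (D.card : ℝ)
          = (A.card * D.card : ℝ)^2 := by ring
        _ ≤ (S.card : ℝ)^2 := this
    · rw [div_le_iff₀ hDpos]
      have := key
      have key' : ((S.card ^ 2 : ℕ) : ℝ) ≤ ((D.card * (((D ×ˢ D ×ˢ D ×ˢ D).filter
          (fun q : G × G × G × G => q.1 + q.2.1 = q.2.2.1 + q.2.2.2)).card) : ℕ) : ℝ) := by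
        exact_mod_cast this
      push_cast at key'
      linarith [key']
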